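/- Fix a positive integer p, nonnegative reals σ_1, …, σ_n, and 0 ≤ r ≤ p. There exists a constant C ≥ 0, independent of k, such that for every integer k ≥ 2p, the quantity F_r = Σ_{(i_1,…,j_p) ∈ I_r} E[f_{i_1,…,j_p}] satisfies |F_r| ≤ C·k^{2p−r}, where the ω_{t,i} (for 1 ≤ t ≤ n, 1 ≤ i ≤ k) are i.i.d. standard Gaussian N(0,1) random variables. Consequently, E[Θ̂_{2p}²] = Σ_{r=0}^{p} F_r is bounded by a constant times k^{2p}. -/

import Mathlib

open MeasureTheory ProbabilityTheory

/-- The random variable `f_{i_1,…,j_p}` from the paper: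
`f = ∏_{h=1}^{p} (Σ_t σ_t² ω_{t,i_h} ω_{t,i_{h+1}}) (Σ_s σ_s² ω_{s,j_h} ω_{s,j_{h+1}})`,
with the cyclic conventions `i_{p+1} ≡ i_1` and `j_{p+1} ≡ j_1`. -/
noncomputable def fTerm {n k p : ℕ} [NeZero p] (σ : Fin n → ℝ) {Ω : Type}
    (ω : Fin n → Fin k → Ω → ℝ) (i j : Fin p → Fin k) (x : Ω) : ℝ :=
  ∏ h : Fin p,
    ((∑ t, σ t ^ 2 * ω t (i h) x * ω t (i (h + 1)) x) *
      (∑ s, σ s ^ 2 * ω s (j h) x * ω s (j (h + 1)) x))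

/-- The rescaled estimator `Θ̂_{2p}` written directly in terms of the Gaussian variables:
`Θ̂_{2p} = Σ_{i_1<…<i_p} ∏_{h=1}^{p} (Σ_t σ_t² ω_{t,i_h} ω_{t,i_{h+1}})`. -/
noncomputable def bigTheta (n k p : ℕ) [NeZero p] (σ : Fin n → ℝ) {Ω : Type}
    (ω : Fin n → Fin k → Ω → ℝ) (x : Ω) : ℝ :=
  ∑ i ∈ Finset.univ.filter (fun i : Fin p → Fin k => StrictMono i),
    ∏ h : Fin p, (∑ t, σ t ^ 2 * ω t (i h) x * ω t (i (h + 1)) x)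

lemma aux_int_exp {b : ℝ} (hb : 0 < b) (c : ℝ) :
    Integrable (fun x : ℝ => Real.exp (c * x - b * x ^ 2)) := by
  have h := (integrable_exp_neg_mul_sq hb).comp_sub_right (c / (2 * b))
  have heq : (fun x : ℝ => Real.exp (c * x - b * x ^ 2))
      = fun x : ℝ => Real.exp (c ^ 2 / (4 * b)) * Real.exp (-b * (x - c / (2 * b)) ^ 2) := by
    funext x
    rw [← Real.exp_add]
    congr 1
    field_simp
    ring
  rw [heq]
  exact h.const_mul _

lemma aux_abs_pow_le (m : ℕ) (x : ℝ) :
    |x| ^ m ≤ (m.factorial : ℝ) * (Real.exp x + Real.exp (-x)) := by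
  have h1 : |x| ^ m / (m.factorial : ℝ) ≤ Real.exp |x| := by
    calc |x| ^ m / (m.factorial : ℝ)
        ≤ ∑ i ∈ Finset.range (m + 1), |x| ^ i / (i.factorial : ℝ) :=
          Finset.single_le_sum (f := fun i => |x| ^ i / (i.factorial : ℝ))
            (fun i _ => by positivity) (Finset.self_mem_range_succ m)
      _ ≤ Real.exp |x| := Real.sum_le_exp_of_nonneg (abs_nonneg x) _
  have h2 : Real.exp |x| ≤ Real.exp x + Real.exp (-x) := by
    rcases abs_cases x with ⟨h, _⟩ | ⟨h, _⟩
    · rw [h]; linarith [Real.exp_pos (-x)]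
    · rw [h]; linarith [Real.exp_pos x]
  have hm : (0:ℝ) < m.factorial := by positivity
  calc |x| ^ m = (m.factorial : ℝ) * (|x| ^ m / m.factorial) := by field_simp
    _ ≤ (m.factorial : ℝ) * (Real.exp x + Real.exp (-x)) := by
        exact mul_le_mul_of_nonneg_left (h1.trans h2) hm.le

lemma aux_int_abs_pow_exp {b : ℝ} (hb : 0 < b) (m : ℕ) :
    Integrable (fun x : ℝ => |x| ^ m * Real.exp (-b * x ^ 2)) := by
  have hg : Integrable (fun x : ℝ => (m.factorial : ℝ) *
      (Real.exp (1 * x - b * x ^ 2) + Real.exp ((-1) * x - b * x ^ 2))) :=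
    ((aux_int_exp hb 1).add (aux_int_exp hb (-1))).const_mul _
  refine hg.mono' ?_ (Filter.Eventually.of_forall fun x => ?_)
  · exact ((measurable_abs.pow_const m).mul
      (((measurable_id.pow_const 2).const_mul (-b)).exp)).aestronglyMeasurable
  · have h0 : (0:ℝ) ≤ Real.exp (-b * x ^ 2) := (Real.exp_pos _).le
    rw [Real.norm_eq_abs, abs_mul, abs_of_nonneg h0,
      abs_of_nonneg (pow_nonneg (abs_nonneg x) m)]
    calc |x| ^ m * Real.exp (-b * x ^ 2)
        ≤ ((m.factorial : ℝ) * (Real.exp x + Real.exp (-x))) * Real.exp (-b * x ^ 2) :=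
          mul_le_mul_of_nonneg_right (aux_abs_pow_le m x) h0
      _ = (m.factorial : ℝ) *
          (Real.exp (1 * x - b * x ^ 2) + Real.exp ((-1) * x - b * x ^ 2)) := by
          rw [show (1:ℝ) * x - b * x ^ 2 = x + (-b * x ^ 2) by ring,
            show (-1:ℝ) * x - b * x ^ 2 = (-x) + (-b * x ^ 2) by ring,
            Real.exp_add, Real.exp_add]
          ring

lemma aux_int_abs_pow_gaussian (m : ℕ) :
    Integrable (fun x : ℝ => |x| ^ m) (gaussianReal 0 1) := by
  rw [gaussianReal_of_var_ne_zero 0 one_ne_zero,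
    integrable_withDensity_iff (measurable_gaussianPDF 0 1)
      (Filter.Eventually.of_forall fun x => ENNReal.ofReal_lt_top)]
  have heq : (fun x : ℝ => |x| ^ m * (gaussianPDF 0 1 x).toReal)
      = fun x : ℝ => (Real.sqrt (2 * Real.pi * 1))⁻¹ * (|x| ^ m * Real.exp (-(2:ℝ)⁻¹ * x ^ 2)) := by
    funext x
    rw [gaussianPDF, ENNReal.toReal_ofReal (gaussianPDFReal_nonneg _ _ _), gaussianPDFReal]
    push_cast
    ring_nf
  rw [heq]
  exact (aux_int_abs_pow_exp (by norm_num) m).const_mul _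


lemma aux_strictMono_eq_of_image_eq {p k : ℕ} {f g : Fin p → Fin k}
    (hf : StrictMono f) (hg : StrictMono g)
    (h : Finset.image f Finset.univ = Finset.image g Finset.univ) : f = g := by
  have hcard : (Finset.image f Finset.univ).card = p := by
    rw [Finset.card_image_of_injective _ hf.injective, Finset.card_univ, Fintype.card_fin]
  have h1 := Finset.orderEmbOfFin_unique hcard
    (fun x => Finset.mem_image_of_mem f (Finset.mem_univ x)) hf
  have h2 := Finset.orderEmbOfFin_unique hcard
    (fun x => by rw [h]; exact Finset.mem_image_of_mem g (Finset.mem_univ x)) hg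
  exact h1.trans h2.symm

lemma aux_image_filter {p k : ℕ} (i : Fin p → Fin k) (T : Finset (Fin k)) :
    Finset.image i (Finset.univ.filter (fun h => i h ∈ T))
      = Finset.image i Finset.univ ∩ T := by
  ext y
  simp only [Finset.mem_image, Finset.mem_filter, Finset.mem_univ, true_and,
    Finset.mem_inter]
  constructor
  · rintro ⟨h, hT, rfl⟩; exact ⟨⟨h, rfl⟩, hT⟩
  · rintro ⟨⟨h, rfl⟩, hT⟩; exact ⟨h, hT, rfl⟩

lemma aux_count {p k r : ℕ} (hr : r ≤ p) :
    (Finset.univ.filter (fun ij : (Fin p → Fin k) × (Fin p → Fin k) =>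
      StrictMono ij.1 ∧ StrictMono ij.2 ∧
      (Finset.image ij.1 Finset.univ ∩ Finset.image ij.2 Finset.univ).card = r)).card
    ≤ 2 ^ p * k ^ (2 * p - r) := by
  classical
  set T := (Finset.univ : Finset (Fin p → Fin k)) ×ˢ
    ((Finset.univ : Finset (Finset (Fin p))) ×ˢ
      Finset.powersetCard (p - r) (Finset.univ : Finset (Fin k))) with hT
  have key : (Finset.univ.filter (fun ij : (Fin p → Fin k) × (Fin p → Fin k) =>
      StrictMono ij.1 ∧ StrictMono ij.2 ∧
      (Finset.image ij.1 Finset.univ ∩ Finset.image ij.2 Finset.univ).card = r)).card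
      ≤ T.card := by
    apply Finset.card_le_card_of_injOn (fun ij =>
      (ij.1, Finset.univ.filter (fun h => ij.1 h ∈ Finset.image ij.2 Finset.univ),
        Finset.image ij.2 Finset.univ \ Finset.image ij.1 Finset.univ))
    · intro ij hij
      simp only [Finset.mem_coe, Finset.mem_filter, Finset.mem_univ, true_and] at hij
      obtain ⟨h1, h2, h3⟩ := hij
      simp only [Finset.mem_coe, hT, Finset.mem_product, Finset.mem_univ, true_and,
        Finset.mem_powersetCard_univ]
      have hcard2 : (Finset.image ij.2 Finset.univ).card = p := by
        rw [Finset.card_image_of_injective _ h2.injective, Finset.card_univ, Fintype.card_fin]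
      have h4 := Finset.card_inter_add_card_sdiff (Finset.image ij.2 Finset.univ)
        (Finset.image ij.1 Finset.univ)
      rw [hcard2, Finset.inter_comm] at h4
      omega
    · intro ij hij ij' hij' heq
      simp only [Finset.mem_coe, Finset.mem_filter, Finset.mem_univ, true_and] at hij hij'
      obtain ⟨h1, h2, h3⟩ := hij
      obtain ⟨h1', h2', h3'⟩ := hij'
      have e1 : ij.1 = ij'.1 := congrArg (fun z => z.1) heq
      have e2 : Finset.filter (fun h => ij.1 h ∈ Finset.image ij.2 Finset.univ) Finset.univ
          = Finset.filter (fun h => ij'.1 h ∈ Finset.image ij'.2 Finset.univ) Finset.univ :=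
        congrArg (fun z => z.2.1) heq
      have e3 : Finset.image ij.2 Finset.univ \ Finset.image ij.1 Finset.univ
          = Finset.image ij'.2 Finset.univ \ Finset.image ij'.1 Finset.univ :=
        congrArg (fun z => z.2.2) heq
      have him : Finset.image ij.2 Finset.univ = Finset.image ij'.2 Finset.univ := by
        have hu := Finset.sdiff_union_inter (Finset.image ij.2 Finset.univ)
          (Finset.image ij.1 Finset.univ)
        have hu' := Finset.sdiff_union_inter (Finset.image ij'.2 Finset.univ)
          (Finset.image ij'.1 Finset.univ)
        have hi : Finset.image ij.2 Finset.univ ∩ Finset.image ij.1 Finset.univ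
            = Finset.image ij'.2 Finset.univ ∩ Finset.image ij'.1 Finset.univ := by
          calc Finset.image ij.2 Finset.univ ∩ Finset.image ij.1 Finset.univ
              = Finset.image ij.1 (Finset.filter
                  (fun h => ij.1 h ∈ Finset.image ij.2 Finset.univ) Finset.univ) := by
                rw [aux_image_filter, Finset.inter_comm]
            _ = Finset.image ij'.1 (Finset.filter
                  (fun h => ij'.1 h ∈ Finset.image ij'.2 Finset.univ) Finset.univ) := by
                rw [e2, e1]
            _ = Finset.image ij'.2 Finset.univ ∩ Finset.image ij'.1 Finset.univ := by
                rw [aux_image_filter, Finset.inter_comm]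
        rw [← hu, ← hu', hi, e3]
      exact Prod.ext e1 (aux_strictMono_eq_of_image_eq h2 h2' him)
  refine key.trans ?_
  have hTcard : T.card = k ^ p * (2 ^ p * Nat.choose k (p - r)) := by
    rw [hT, Finset.card_product, Finset.card_product, Finset.card_powersetCard,
      Finset.card_univ, Finset.card_univ, Finset.card_univ]
    simp [Fintype.card_fun]
  rw [hTcard]
  calc k ^ p * (2 ^ p * Nat.choose k (p - r))
      ≤ k ^ p * (2 ^ p * k ^ (p - r)) := by
        exact Nat.mul_le_mul_left _ (Nat.mul_le_mul_left _ (Nat.choose_le_pow k (p - r)))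
    _ = 2 ^ p * k ^ (2 * p - r) := by
        rw [show 2 * p - r = p + (p - r) by omega, pow_add]; ring

section KeyLemma

variable {n k p : ℕ} [NeZero p]

lemma aux_key (σ : Fin n → ℝ) {Ω : Type} [MeasureSpace Ω]
    [IsProbabilityMeasure (ℙ : Measure Ω)] (ω : Fin n → Fin k → Ω → ℝ)
    (hmeas : ∀ a b, Measurable (ω a b))
    (hmap : ∀ a b, Measure.map (ω a b) ℙ = gaussianReal 0 1)
    (i j : Fin p → Fin k) :
    Integrable (fun x => fTerm σ ω i j x) ℙ ∧
      |∫ x, fTerm σ ω i j x ∂ℙ| ≤ ((n * (2 * p) : ℕ) : ℝ) ^ (2 * p - 1) *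
        ((∑ t, σ t ^ (4 * p)) * ((2 * p : ℕ) *
          (∫ y, |y| ^ (4 * p) ∂(gaussianReal 0 1)))) := by
  classical
  set M : ℝ := ∫ y, |y| ^ (4 * p) ∂(gaussianReal 0 1) with hMdef
  have hM : 0 ≤ M := integral_nonneg fun y => by positivity
  have hev : ∀ y : ℝ, (0:ℝ) ≤ y ^ (4 * p) := fun y => by
    rw [show 4 * p = 2 * (2 * p) by ring, pow_mul]; positivity
  set S : Finset (Fin k) := Finset.image i Finset.univ ∪ Finset.image j Finset.univ with hS
  have hiS : ∀ h, i h ∈ S := fun h =>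
    Finset.mem_union_left _ (Finset.mem_image_of_mem _ (Finset.mem_univ h))
  have hjS : ∀ h, j h ∈ S := fun h =>
    Finset.mem_union_right _ (Finset.mem_image_of_mem _ (Finset.mem_univ h))
  have hScard : S.card ≤ 2 * p := by
    calc S.card ≤ (Finset.image i Finset.univ).card + (Finset.image j Finset.univ).card :=
          Finset.card_union_le _ _
      _ ≤ p + p := add_le_add
          (Finset.card_image_le.trans (by simp))
          (Finset.card_image_le.trans (by simp))
      _ = 2 * p := by ring
  -- moments of individual variables
  have hωm : ∀ t a, Integrable (fun x => (ω t a x) ^ (4 * p)) ℙ ∧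
      (∫ x, (ω t a x) ^ (4 * p) ∂ℙ) = M := by
    intro t a
    have hmeq : ∀ y : ℝ, |y| ^ (4 * p) = y ^ (4 * p) := fun y =>
      Even.pow_abs ⟨2 * p, by ring⟩ y
    have hint : Integrable (fun y : ℝ => y ^ (4 * p)) (gaussianReal 0 1) := by
      have := aux_int_abs_pow_gaussian (4 * p)
      simpa only [hmeq] using this
    have hsm : AEStronglyMeasurable (fun y : ℝ => y ^ (4 * p))
        (Measure.map (ω t a) ℙ) :=
      (measurable_id.pow_const _).aestronglyMeasurable
    constructor
    · have h1 := (integrable_map_measure hsm (hmeas t a).aemeasurable).1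
        (by rw [hmap t a]; exact hint)
      exact h1
    · have h2 : ∫ x, (ω t a x) ^ (4 * p) ∂ℙ
          = ∫ y, y ^ (4 * p) ∂(Measure.map (ω t a) ℙ) :=
        (integral_map (hmeas t a).aemeasurable hsm).symm
      rw [h2, hmap t a, hMdef]
      exact integral_congr_ae (Filter.Eventually.of_forall fun y => (hmeq y).symm)
  -- the quadratic envelope Z
  set Z : Ω → ℝ := fun x => ∑ q ∈ Finset.univ ×ˢ S, σ q.1 ^ 2 * (ω q.1 q.2 x) ^ 2 with hZ
  have hZ0 : ∀ x, 0 ≤ Z x := fun x =>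
    Finset.sum_nonneg fun q _ => mul_nonneg (sq_nonneg _) (sq_nonneg _)
  have hfactor : ∀ (f : Fin p → Fin k), (∀ h, f h ∈ S) → ∀ (h h' : Fin p) (x : Ω),
      |∑ t, σ t ^ 2 * ω t (f h) x * ω t (f h') x| ≤ Z x := by
    intro f hfS h h' x
    calc |∑ t, σ t ^ 2 * ω t (f h) x * ω t (f h') x|
        ≤ ∑ t, |σ t ^ 2 * ω t (f h) x * ω t (f h') x| := Finset.abs_sum_le_sum_abs _ _
      _ ≤ ∑ t, σ t ^ 2 * (∑ a ∈ S, (ω t a x) ^ 2) := by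
          refine Finset.sum_le_sum fun t _ => ?_
          have hu : (ω t (f h) x) ^ 2 ≤ ∑ a ∈ S, (ω t a x) ^ 2 :=
            Finset.single_le_sum (f := fun a => (ω t a x) ^ 2)
              (fun a _ => sq_nonneg _) (hfS h)
          have hv : (ω t (f h') x) ^ 2 ≤ ∑ a ∈ S, (ω t a x) ^ 2 :=
            Finset.single_le_sum (f := fun a => (ω t a x) ^ 2)
              (fun a _ => sq_nonneg _) (hfS h')
          have huv : |ω t (f h) x| * |ω t (f h') x| ≤ ∑ a ∈ S, (ω t a x) ^ 2 := by
            nlinarith [sq_nonneg (|ω t (f h) x| - |ω t (f h') x|),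
              sq_abs (ω t (f h) x), sq_abs (ω t (f h') x)]
          calc |σ t ^ 2 * ω t (f h) x * ω t (f h') x|
              = σ t ^ 2 * (|ω t (f h) x| * |ω t (f h') x|) := by
                rw [abs_mul, abs_mul, abs_of_nonneg (sq_nonneg (σ t)), mul_assoc]
            _ ≤ σ t ^ 2 * (∑ a ∈ S, (ω t a x) ^ 2) :=
                mul_le_mul_of_nonneg_left huv (sq_nonneg (σ t))
      _ = Z x := by
          show _ = ∑ q ∈ Finset.univ ×ˢ S, σ q.1 ^ 2 * ω q.1 q.2 x ^ 2
          rw [Finset.sum_product]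
          exact Finset.sum_congr rfl fun t _ => Finset.mul_sum _ _ _
  have hbound : ∀ x, |fTerm σ ω i j x| ≤ Z x ^ (2 * p) := by
    intro x
    simp only [fTerm]
    calc |∏ h : Fin p, ((∑ t, σ t ^ 2 * ω t (i h) x * ω t (i (h + 1)) x) *
            (∑ s, σ s ^ 2 * ω s (j h) x * ω s (j (h + 1)) x))|
        = ∏ h : Fin p, |(∑ t, σ t ^ 2 * ω t (i h) x * ω t (i (h + 1)) x) *
            (∑ s, σ s ^ 2 * ω s (j h) x * ω s (j (h + 1)) x)| := Finset.abs_prod _ _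
      _ ≤ ∏ _h : Fin p, (Z x * Z x) := by
          refine Finset.prod_le_prod (fun _ _ => abs_nonneg _) fun h _ => ?_
          rw [abs_mul]
          exact mul_le_mul (hfactor i hiS h (h + 1) x) (hfactor j hjS h (h + 1) x)
            (abs_nonneg _) (hZ0 x)
      _ = (Z x * Z x) ^ p := by rw [Finset.prod_const, Finset.card_univ, Fintype.card_fin]
      _ = Z x ^ (2 * p) := by rw [← pow_two, ← pow_mul]
  -- Jensen step
  set g : Ω → ℝ := fun x => ((n * (2 * p) : ℕ) : ℝ) ^ (2 * p - 1) *
    ∑ q ∈ Finset.univ ×ˢ S, σ q.1 ^ (4 * p) * (ω q.1 q.2 x) ^ (4 * p) with hg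
  have hZpow : ∀ x, Z x ^ (2 * p) ≤ g x := by
    intro x
    have hp1 : 2 * p - 1 + 1 = 2 * p := by
      have := Nat.pos_of_ne_zero (NeZero.ne p); omega
    have hJ := pow_sum_le_card_mul_sum_pow (s := Finset.univ ×ˢ S)
      (f := fun q => σ q.1 ^ 2 * (ω q.1 q.2 x) ^ 2)
      (fun q _ => mul_nonneg (sq_nonneg _) (sq_nonneg _)) (2 * p - 1)
    rw [hp1] at hJ
    refine hJ.trans ?_
    rw [hg]
    have hterm : ∀ q ∈ Finset.univ ×ˢ S,
        (σ q.1 ^ 2 * (ω q.1 q.2 x) ^ 2) ^ (2 * p) = σ q.1 ^ (4 * p) * (ω q.1 q.2 x) ^ (4 * p) := by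
      intro q _
      rw [mul_pow, ← pow_mul, ← pow_mul, show 2 * (2 * p) = 4 * p by ring]
    rw [Finset.sum_congr rfl hterm]
    refine mul_le_mul_of_nonneg_right ?_ ?_
    · refine pow_le_pow_left₀ (by positivity) ?_ _
      have : ((Finset.univ : Finset (Fin n)) ×ˢ S).card ≤ n * (2 * p) := by
        rw [Finset.card_product, Finset.card_univ, Fintype.card_fin]
        exact Nat.mul_le_mul_left _ hScard
      exact_mod_cast this
    · exact Finset.sum_nonneg fun q _ => mul_nonneg (by
        rw [show 4 * p = 2 * (2 * p) by ring, pow_mul]; positivity) (hev _)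
  have hg_int : Integrable g ℙ :=
    (integrable_finset_sum _ fun q _ => ((hωm q.1 q.2).1.const_mul _)).const_mul _
  have hg_val : ∫ x, g x ∂ℙ ≤ ((n * (2 * p) : ℕ) : ℝ) ^ (2 * p - 1) *
      ((∑ t, σ t ^ (4 * p)) * ((2 * p : ℕ) * M)) := by
    rw [hg, integral_const_mul, integral_finset_sum _
      (fun q _ => ((hωm q.1 q.2).1.const_mul _))]
    refine mul_le_mul_of_nonneg_left ?_ (by positivity)
    have : ∀ q ∈ Finset.univ ×ˢ S, ∫ x, σ q.1 ^ (4 * p) * (ω q.1 q.2 x) ^ (4 * p) ∂ℙ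
        = σ q.1 ^ (4 * p) * M := by
      intro q _
      rw [integral_const_mul, (hωm q.1 q.2).2]
    rw [Finset.sum_congr rfl this, Finset.sum_product]
    have hstep : ∀ t ∈ (Finset.univ : Finset (Fin n)),
        ∑ _a ∈ S, σ t ^ (4 * p) * M = σ t ^ (4 * p) * (S.card * M) := by
      intro t _
      rw [Finset.sum_const, nsmul_eq_mul]; ring
    rw [Finset.sum_congr rfl hstep]
    have hσt : ∀ t : Fin n, (0:ℝ) ≤ σ t ^ (4 * p) := fun t => by
      rw [show 4 * p = 2 * (2 * p) by ring, pow_mul]; positivity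
    calc ∑ t, σ t ^ (4 * p) * (S.card * M)
        ≤ ∑ t, σ t ^ (4 * p) * ((2 * p : ℕ) * M) := by
          refine Finset.sum_le_sum fun t _ => ?_
          refine mul_le_mul_of_nonneg_left ?_ (hσt t)
          refine mul_le_mul_of_nonneg_right ?_ hM
          exact_mod_cast hScard
      _ = (∑ t, σ t ^ (4 * p)) * ((2 * p : ℕ) * M) := by rw [← Finset.sum_mul]
  -- measurability
  have hA : ∀ (f : Fin p → Fin k) (h h' : Fin p),
      Measurable (fun x => ∑ t, σ t ^ 2 * ω t (f h) x * ω t (f h') x) := by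
    intro f h h'
    exact Finset.measurable_sum _ fun t _ =>
      (((hmeas t (f h)).const_mul _).mul (hmeas t (f h')))
  have hmeas_f : Measurable (fun x => fTerm σ ω i j x) := by
    simp only [fTerm]
    exact Finset.measurable_prod _ fun h _ => (hA i h (h + 1)).mul (hA j h (h + 1))
  have h_int : Integrable (fun x => fTerm σ ω i j x) ℙ := by
    refine hg_int.mono' hmeas_f.aestronglyMeasurable
      (Filter.Eventually.of_forall fun x => ?_)
    rw [Real.norm_eq_abs]
    exact (hbound x).trans (hZpow x)
  refine ⟨h_int, ?_⟩
  calc |∫ x, fTerm σ ω i j x ∂ℙ| ≤ ∫ x, |fTerm σ ω i j x| ∂ℙ := by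
        simpa only [Real.norm_eq_abs] using
          norm_integral_le_integral_norm (fun x => fTerm σ ω i j x)
    _ ≤ ∫ x, g x ∂ℙ := integral_mono_of_nonneg
        (Filter.Eventually.of_forall fun x => abs_nonneg _) hg_int
        (Filter.Eventually.of_forall fun x => (hbound x).trans (hZpow x))
    _ ≤ _ := hg_val

end KeyLemma

/-- For fixed `p`, `σ` and `0 ≤ r ≤ p`, there is a constant `C ≥ 0`,
independent of `k`, such that for every `k ≥ 2p` the quantity
`F_r = Σ_{(i,j) ∈ I_r} E[f_{i_1,…,j_p}]` satisfies `|F_r| ≤ C·k^{2p-r}`; consequently,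
the second moment `E[Θ̂_{2p}²]` is bounded by a constant times `k^{2p}`. -/
theorem stmt7 {n p : ℕ} [NeZero p] (σ : Fin n → ℝ) (hσ : ∀ a, 0 ≤ σ a)
    (r : ℕ) (hr : r ≤ p) :
    ∃ C : ℝ, 0 ≤ C ∧ ∃ C' : ℝ, 0 ≤ C' ∧ ∀ (k : ℕ), 2 * p ≤ k →
      ∀ (Ω : Type) [MeasureSpace Ω] [IsProbabilityMeasure (ℙ : Measure Ω)]
        (ω : Fin n → Fin k → Ω → ℝ),
        (∀ a b, Measurable (ω a b)) →
        (∀ a b, Measure.map (ω a b) ℙ = gaussianReal 0 1) →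
        (iIndepFun
          (fun ab : Fin n × Fin k => ω ab.1 ab.2) ℙ) →
        |∑ ij ∈ Finset.univ.filter
            (fun ij : (Fin p → Fin k) × (Fin p → Fin k) =>
              StrictMono ij.1 ∧ StrictMono ij.2 ∧
              (Finset.image ij.1 Finset.univ ∩ Finset.image ij.2 Finset.univ).card = r),
            ∫ x, fTerm σ ω ij.1 ij.2 x ∂ℙ| ≤ C * (k : ℝ) ^ (2 * p - r) ∧
        (∫ x, (bigTheta n k p σ ω x) ^ 2 ∂ℙ) ≤ C' * (k : ℝ) ^ (2 * p) := by
  classical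
  set B : ℝ := ((n * (2 * p) : ℕ) : ℝ) ^ (2 * p - 1) *
    ((∑ t, σ t ^ (4 * p)) * ((2 * p : ℕ) *
      (∫ y, |y| ^ (4 * p) ∂(gaussianReal 0 1)))) with hBdef
  have hM : 0 ≤ ∫ y, |y| ^ (4 * p) ∂(gaussianReal 0 1 : Measure ℝ) :=
    integral_nonneg fun y => by positivity
  have hSig : 0 ≤ ∑ t, σ t ^ (4 * p) :=
    Finset.sum_nonneg fun t _ => pow_nonneg (hσ t) _
  have hB : 0 ≤ B := by
    rw [hBdef]
    exact mul_nonneg (by positivity) (mul_nonneg hSig (mul_nonneg (by positivity) hM))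
  refine ⟨2 ^ p * B, mul_nonneg (by positivity) hB, B, hB, ?_⟩
  intro k hk Ω _ _ ω hmeas hmap _
  have key : ∀ i j : Fin p → Fin k,
      Integrable (fun x => fTerm σ ω i j x) ℙ ∧ |∫ x, fTerm σ ω i j x ∂ℙ| ≤ B :=
    fun i j => ⟨(aux_key σ ω hmeas hmap i j).1,
      le_of_le_of_eq (aux_key σ ω hmeas hmap i j).2 hBdef.symm⟩
  constructor
  · calc |∑ ij ∈ Finset.univ.filter
            (fun ij : (Fin p → Fin k) × (Fin p → Fin k) =>
              StrictMono ij.1 ∧ StrictMono ij.2 ∧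
              (Finset.image ij.1 Finset.univ ∩ Finset.image ij.2 Finset.univ).card = r),
            ∫ x, fTerm σ ω ij.1 ij.2 x ∂ℙ|
        ≤ ∑ ij ∈ Finset.univ.filter
            (fun ij : (Fin p → Fin k) × (Fin p → Fin k) =>
              StrictMono ij.1 ∧ StrictMono ij.2 ∧
              (Finset.image ij.1 Finset.univ ∩ Finset.image ij.2 Finset.univ).card = r),
            |∫ x, fTerm σ ω ij.1 ij.2 x ∂ℙ| := Finset.abs_sum_le_sum_abs _ _
      _ ≤ (Finset.univ.filter
            (fun ij : (Fin p → Fin k) × (Fin p → Fin k) =>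
              StrictMono ij.1 ∧ StrictMono ij.2 ∧
              (Finset.image ij.1 Finset.univ ∩ Finset.image ij.2 Finset.univ).card = r)).card
            • B := Finset.sum_le_card_nsmul _ _ B fun ij _ => (key ij.1 ij.2).2
      _ ≤ ((2 ^ p * k ^ (2 * p - r) : ℕ) : ℝ) * B := by
          rw [nsmul_eq_mul]
          exact mul_le_mul_of_nonneg_right (Nat.cast_le.2 (aux_count hr)) hB
      _ = 2 ^ p * B * (k : ℝ) ^ (2 * p - r) := by push_cast; ring
  · set P := Finset.univ.filter (fun i : Fin p → Fin k => StrictMono i) with hP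
    have hexp : ∀ x, bigTheta n k p σ ω x ^ 2 = ∑ ij ∈ P ×ˢ P, fTerm σ ω ij.1 ij.2 x := by
      intro x
      rw [bigTheta, pow_two, Finset.sum_mul_sum, Finset.sum_product]
      refine Finset.sum_congr rfl fun a _ => Finset.sum_congr rfl fun b _ => ?_
      simp only [fTerm]
      exact Finset.prod_mul_distrib.symm
    calc ∫ x, bigTheta n k p σ ω x ^ 2 ∂ℙ
        = ∑ ij ∈ P ×ˢ P, ∫ x, fTerm σ ω ij.1 ij.2 x ∂ℙ :=
          (integral_congr_ae (Filter.Eventually.of_forall hexp)).trans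
            (integral_finset_sum _ fun ij _ => (key ij.1 ij.2).1)
      _ ≤ ∑ ij ∈ P ×ˢ P, |∫ x, fTerm σ ω ij.1 ij.2 x ∂ℙ| :=
          Finset.sum_le_sum fun ij _ => le_abs_self _
      _ ≤ (P ×ˢ P).card • B := Finset.sum_le_card_nsmul _ _ B fun ij _ => (key ij.1 ij.2).2
      _ ≤ ((k ^ p * k ^ p : ℕ) : ℝ) * B := by
          rw [nsmul_eq_mul]
          refine mul_le_mul_of_nonneg_right (Nat.cast_le.2 ?_) hB
          rw [Finset.card_product]
          have h1 : P.card ≤ k ^ p := by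
            calc P.card ≤ (Finset.univ : Finset (Fin p → Fin k)).card :=
                  Finset.card_filter_le _ _
              _ = k ^ p := by simp [Finset.card_univ]
          exact Nat.mul_le_mul h1 h1
      _ = B * (k : ℝ) ^ (2 * p) := by push_cast; rw [two_mul, pow_add]; ring
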